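/- Let ζ = exp(2πi/5) and φ = (1+√5)/2. Then D₂(ζ) + 2·D₂(ζ²) = 2·D₂(φ·ζ). (This is the Bloch–Wigner identity underlying the scissors-congruence computation N₁ ≡ ±10[ζφ] of §6 of the paper, which evaluates the limiting regulator of the coordinate symbol at the first node of the conifold curve.) -/

import Mathlib

/-- The dilogarithm Li₂(z) = −∫₀¹ Log(1−z·t)/t dt, with the principal branch Log. -/
noncomputable def Li2 (z : ℂ) : ℂ :=
  -∫ t in (0 : ℝ)..(1 : ℝ), Complex.log (1 - z * (t : ℂ)) / (t : ℂ)

open Set MeasureTheory intervalIntegral Complex Metric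

/-- the points `1 - w t`, `t ∈ [0,1]`, avoid the branch cut -/
def Ok (w : ℂ) : Prop := ∀ t ∈ Set.Icc (0:ℝ) 1, (1 - w * (t:ℂ)) ∈ Complex.slitPlane

lemma im_one_sub_mul (w : ℂ) (t : ℝ) : (1 - w * (t:ℂ)).im = -(w.im * t) := by
  simp [Complex.sub_im, Complex.mul_im]

lemma re_one_sub_mul (w : ℂ) (t : ℝ) : (1 - w * (t:ℂ)).re = 1 - w.re * t := by
  simp [Complex.sub_re, Complex.mul_re]

lemma ok_of_im_ne {w : ℂ} (h : w.im ≠ 0) : Ok w := by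
  intro t ht
  rcases eq_or_lt_of_le ht.1 with h0 | h0
  · rw [Complex.mem_slitPlane_iff, ← h0]; left; norm_num
  · rw [Complex.mem_slitPlane_iff]; right
    rw [im_one_sub_mul]
    exact fun hc => h (by nlinarith [neg_eq_zero.mp hc])

lemma ok_zero : Ok 0 := by
  intro t _; rw [Complex.mem_slitPlane_iff]; left; norm_num

lemma exists_bound {w : ℂ} (hw : Ok w) :
    ∃ m : ℝ, 0 < m ∧ ∀ x ∈ Metric.closedBall w (m/2), ∀ t ∈ Set.Icc (0:ℝ) 1,
      (1 - x * (t:ℂ)) ∈ Complex.slitPlane ∧ m/2 ≤ ‖(1 - x * (t:ℂ))‖ := by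
  set h : ℝ → ℝ := fun t => max (1 - w * (t:ℂ)).re |(1 - w * (t:ℂ)).im| with hh
  have hcont : ContinuousOn h (Set.Icc 0 1) := by
    apply Continuous.continuousOn
    have : Continuous fun t : ℝ => (1 - w * (t:ℂ)) := by continuity
    exact (Complex.continuous_re.comp this).max ((Complex.continuous_im.comp this).abs)
  obtain ⟨t₀, ht₀, hmin⟩ := isCompact_Icc.exists_isMinOn ⟨0, by norm_num⟩ hcont
  have hm : 0 < h t₀ := by
    rcases Complex.mem_slitPlane_iff.mp (hw t₀ ht₀) with h1 | h1
    · exact lt_max_of_lt_left h1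
    · exact lt_max_of_lt_right (abs_pos.mpr h1)
  refine ⟨h t₀, hm, ?_⟩
  · intro x hx t ht
    have hmt : h t₀ ≤ h t := hmin ht
    have hdist : ‖((1 - x * (t:ℂ)) - (1 - w * (t:ℂ)))‖ ≤ h t₀ / 2 := by
      have : (1 - x * (t:ℂ)) - (1 - w * (t:ℂ)) = (w - x) * (t:ℂ) := by ring
      rw [this, norm_mul]
      have h1 : ‖w - x‖ ≤ h t₀ / 2 := by
        rw [← Complex.dist_eq, dist_comm]; exact mem_closedBall.mp hx
      have h2 : ‖(t:ℂ)‖ ≤ 1 := by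
        rw [Complex.norm_real, Real.norm_eq_abs, _root_.abs_of_nonneg ht.1]; exact ht.2
      calc ‖w - x‖ * ‖(t:ℂ)‖ ≤ (h t₀ / 2) * 1 := by
            apply mul_le_mul h1 h2 (norm_nonneg _) (by positivity)
        _ = h t₀ / 2 := by ring
    have hre : |(1 - x * (t:ℂ)).re - (1 - w * (t:ℂ)).re| ≤ h t₀ / 2 := by
      have := le_trans (Complex.abs_re_le_norm ((1 - x * (t:ℂ)) - (1 - w * (t:ℂ)))) hdist
      rwa [Complex.sub_re] at this
    have him : |(1 - x * (t:ℂ)).im - (1 - w * (t:ℂ)).im| ≤ h t₀ / 2 := by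
      have := le_trans (Complex.abs_im_le_norm ((1 - x * (t:ℂ)) - (1 - w * (t:ℂ)))) hdist
      rwa [Complex.sub_im] at this
    have key : h t₀ / 2 ≤ max (1 - x * (t:ℂ)).re |(1 - x * (t:ℂ)).im| := by
      apply le_max_iff.mpr
      rcases le_max_iff.mp hmt with h1 | h1
      · left
        have := abs_le.mp hre
        linarith [this.2]
      · right
        have h3 : |(1 - w * (t:ℂ)).im| - |(1 - x * (t:ℂ)).im| ≤
            |(1 - x * (t:ℂ)).im - (1 - w * (t:ℂ)).im| := by
          rw [abs_sub_comm]
          exact abs_sub_abs_le_abs_sub _ _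
        linarith
    constructor
    · rw [Complex.mem_slitPlane_iff]
      rcases le_max_iff.mp key with h1 | h1
      · left; linarith
      · right; intro hc; rw [hc] at h1; simp at h1; linarith
    · rcases le_max_iff.mp key with h1 | h1
      · exact le_trans h1 (le_trans (le_abs_self _) (Complex.abs_re_le_norm _))
      · exact le_trans h1 (Complex.abs_im_le_norm _)

lemma measurable_integrand (x : ℂ) :
    Measurable (fun t : ℝ => Complex.log (1 - x * (t:ℂ)) / (t:ℂ)) :=
  (Complex.measurable_log.comp
    (measurable_const.sub (Complex.measurable_ofReal.const_mul x))).div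
    Complex.measurable_ofReal

lemma norm_log_le {w : ℂ} (hw : Ok w) {m : ℝ} (hm : 0 < m)
    (habs : ∀ t ∈ Set.Icc (0:ℝ) 1, (1 - w * (t:ℂ)) ∈ Complex.slitPlane ∧
       m/2 ≤ ‖(1 - w * (t:ℂ))‖) :
    ∀ t ∈ Set.Icc (0:ℝ) 1, ‖Complex.log (1 - w * (t:ℂ))‖ ≤ (‖w‖ * (2/m)) * t := by
  intro t ht
  have key := Convex.norm_image_sub_le_of_norm_hasDerivWithin_le
    (f := fun s : ℝ => Complex.log (1 - w * (s:ℂ)))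
    (f' := fun s : ℝ => (1 - w * (s:ℂ))⁻¹ * (-w)) (C := ‖w‖ * (2/m)) (s := Set.Icc 0 1)
    ?_ ?_ (convex_Icc 0 1) ⟨le_refl 0, by norm_num⟩ ht
  · rw [show ((‖w‖ * (2/m)) * t) = (‖w‖ * (2/m)) * |t| by rw [_root_.abs_of_nonneg ht.1]]
    simpa [Complex.log_one] using key
  · intro s hs
    have inner : HasDerivAt (fun z : ℂ => 1 - w * z) (-w) (s:ℂ) := by
      simpa using ((hasDerivAt_id (s:ℂ)).const_mul w).const_sub 1
    have hlog := (Complex.hasDerivAt_log (habs s hs).1).comp (s:ℂ) inner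
    exact (hlog.comp_ofReal).hasDerivWithinAt
  · intro s hs
    have h2 : m/2 ≤ ‖(1 - w * (s:ℂ))‖ := (habs s hs).2
    rw [norm_mul, norm_inv, norm_neg]
    have : ‖(1 - w * (s:ℂ))‖⁻¹ ≤ 2/m := by
      rw [show (2:ℝ)/m = (m/2)⁻¹ by rw [inv_div]]
      exact inv_anti₀ (by positivity) h2
    calc ‖(1 - w * (s:ℂ))‖⁻¹ * ‖w‖ ≤ (2/m) * ‖w‖ :=
          mul_le_mul_of_nonneg_right this (norm_nonneg _)
      _ = ‖w‖ * (2/m) := by ring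

lemma intervalIntegrable_logdiv {w : ℂ} (hw : Ok w) :
    IntervalIntegrable (fun t : ℝ => Complex.log (1 - w * (t:ℂ)) / (t:ℂ)) volume 0 1 := by
  obtain ⟨m, hm, hball⟩ := exists_bound hw
  have habs := fun t ht => hball w (Metric.mem_closedBall_self (by positivity)) t ht
  have hb := norm_log_le hw hm habs
  rw [intervalIntegrable_iff, Set.uIoc_of_le (zero_le_one)]
  apply MeasureTheory.Integrable.mono' (g := fun _ => ‖w‖ * (2/m))
  · exact integrableOn_const measure_Ioc_lt_top.ne
  · exact (measurable_integrand w).aestronglyMeasurable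
  · refine (ae_restrict_iff' measurableSet_Ioc).mpr (Filter.Eventually.of_forall ?_)
    intro t ht
    have ht' : t ∈ Set.Icc (0:ℝ) 1 := ⟨le_of_lt ht.1, ht.2⟩
    rw [norm_div, Complex.norm_real]
    rw [div_le_iff₀ (by rw [Real.norm_eq_abs, _root_.abs_of_pos ht.1]; exact ht.1)]
    calc ‖Complex.log (1 - w * (t:ℂ))‖ ≤ (‖w‖ * (2/m)) * t := hb t ht'
      _ = ‖w‖ * (2/m) * ‖t‖ := by rw [Real.norm_eq_abs, _root_.abs_of_pos ht.1]

lemma hasDerivAt_Li2_integral {w : ℂ} (hw : Ok w) :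
    HasDerivAt Li2 (∫ t in (0:ℝ)..1, (1 - w * (t:ℂ))⁻¹) w := by
  obtain ⟨m, hm, hball⟩ := exists_bound hw
  have key := intervalIntegral.hasDerivAt_integral_of_dominated_loc_of_deriv_le
    (F := fun (x : ℂ) (t : ℝ) => Complex.log (1 - x * (t:ℂ)) / (t:ℂ))
    (F' := fun (x : ℂ) (t : ℝ) => -(1 - x * (t:ℂ))⁻¹)
    (x₀ := w) (a := 0) (b := 1) (μ := volume) (bound := fun _ => 2/m)
    (s := Metric.ball w (m/2)) (Metric.ball_mem_nhds w (by positivity))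
    (Filter.Eventually.of_forall fun x => (measurable_integrand x).aestronglyMeasurable)
    (intervalIntegrable_logdiv hw)
    (((measurable_const.sub (Complex.measurable_ofReal.const_mul w)).inv.neg).aestronglyMeasurable)
    ?_ intervalIntegrable_const ?_
  · have h2 := key.2
    have : Li2 = fun x : ℂ => -∫ t in (0:ℝ)..1, Complex.log (1 - x * (t:ℂ)) / (t:ℂ) := rfl
    rw [this]
    have h3 := h2.neg
    rwa [intervalIntegral.integral_neg, neg_neg] at h3
  · refine Filter.Eventually.of_forall fun t ht x hx => ?_
    have ht' : t ∈ Set.Icc (0:ℝ) 1 := by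
      rw [Set.uIoc_of_le zero_le_one] at ht; exact ⟨le_of_lt ht.1, ht.2⟩
    have h2 := (hball x (Metric.ball_subset_closedBall hx) t ht').2
    rw [norm_neg, norm_inv]
    rw [show (2:ℝ)/m = (m/2)⁻¹ by rw [inv_div]]
    exact inv_anti₀ (by positivity) h2
  · refine Filter.Eventually.of_forall fun t ht x hx => ?_
    have ht0 : (0:ℝ) < t := by rw [Set.uIoc_of_le zero_le_one] at ht; exact ht.1
    have ht' : t ∈ Set.Icc (0:ℝ) 1 := by
      rw [Set.uIoc_of_le zero_le_one] at ht; exact ⟨le_of_lt ht.1, ht.2⟩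
    have hslit := (hball x (Metric.ball_subset_closedBall hx) t ht').1
    have inner : HasDerivAt (fun x : ℂ => 1 - x * (t:ℂ)) (-(t:ℂ)) x := by
      simpa using ((hasDerivAt_id x).mul_const (t:ℂ)).const_sub 1
    have hlog := ((Complex.hasDerivAt_log hslit).comp x inner).div_const (t:ℂ)
    refine hlog.congr_deriv (Eq.symm ?_)
    have htne : (t:ℂ) ≠ 0 := Complex.ofReal_ne_zero.mpr (ne_of_gt ht0)
    have hne : (1 - x * (t:ℂ)) ≠ 0 := Complex.slitPlane_ne_zero hslit
    field_simp

lemma Li2_zero : Li2 0 = 0 := by simp [Li2]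

lemma integral_inv_eval {w : ℂ} (hw : Ok w) (h0 : w ≠ 0) :
    ∫ t in (0:ℝ)..1, (1 - w * (t:ℂ))⁻¹ = -Complex.log (1 - w) / w := by
  have heval := intervalIntegral.integral_eq_sub_of_hasDerivAt
    (f := fun t : ℝ => -Complex.log (1 - w * (t:ℂ)) / w)
    (f' := fun t : ℝ => (1 - w * (t:ℂ))⁻¹) (a := 0) (b := 1) ?_ ?_
  · rw [heval]; norm_num
  · intro t ht
    rw [Set.uIcc_of_le zero_le_one] at ht
    have inner : HasDerivAt (fun z : ℂ => 1 - w * z) (-w) (t:ℂ) := by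
      simpa using ((hasDerivAt_id (t:ℂ)).const_mul w).const_sub 1
    have hlog := (((Complex.hasDerivAt_log (hw t ht)).comp (t:ℂ) inner).neg.div_const w).comp_ofReal
    refine hlog.congr_deriv (Eq.symm ?_)
    have hne : (1 - w * (t:ℂ)) ≠ 0 := Complex.slitPlane_ne_zero (hw t ht)
    field_simp
  · apply ContinuousOn.intervalIntegrable
    apply ContinuousOn.inv₀
    · exact (continuous_const.sub ((continuous_const.mul Complex.continuous_ofReal))).continuousOn
    · intro t ht
      rw [Set.uIcc_of_le zero_le_one] at ht
      exact Complex.slitPlane_ne_zero (hw t ht)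

lemma hasDerivAt_Li2' {w : ℂ} (hw : Ok w) (h0 : w ≠ 0) :
    HasDerivAt Li2 (-Complex.log (1 - w) / w) w := by
  rw [← integral_inv_eval hw h0]; exact hasDerivAt_Li2_integral hw

lemma hasDerivAt_Li2_zero : HasDerivAt Li2 1 0 := by
  have h := hasDerivAt_Li2_integral ok_zero
  simpa using h

lemma im_real_mul (x : ℝ) (z : ℂ) : ((x:ℂ) * z).im = x * z.im := by
  simp [Complex.mul_im]

lemma dup {z : ℂ} (him1 : z.im ≠ 0) (him2 : (z^2).im ≠ 0) (hre : |z.re| < 1) :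
    Li2 z + Li2 (-z) = (1/2) * Li2 (z^2) := by
  set G : ℝ → ℂ := fun x => Li2 ((x:ℂ)*z) + Li2 (-((x:ℂ)*z)) - (2⁻¹:ℂ) * Li2 (((x:ℂ)*z)^2)
    with hG_def
  have hG : ∀ x ∈ Set.Icc (0:ℝ) 1, HasDerivAt G 0 x := by
    intro x hx
    have hinner1 : HasDerivAt (fun s : ℂ => s * z) z (x:ℂ) := by
      simpa using (hasDerivAt_id (x:ℂ)).mul_const z
    have hinner2 : HasDerivAt (fun s : ℂ => -(s * z)) (-z) (x:ℂ) := hinner1.neg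
    have hinner3 : HasDerivAt (fun s : ℂ => (s * z)^2) (2 * ((x:ℂ)*z) * z) (x:ℂ) := by
      simpa using hinner1.fun_pow 2
    rcases eq_or_lt_of_le hx.1 with h0 | h0
    · subst h0
      have e1 : HasDerivAt Li2 1 (((0:ℝ):ℂ)*z) := by
        rw [show ((0:ℝ):ℂ)*z = 0 by simp]; exact hasDerivAt_Li2_zero
      have e2 : HasDerivAt Li2 1 (-(((0:ℝ):ℂ)*z)) := by
        rw [show -(((0:ℝ):ℂ)*z) = 0 by simp]; exact hasDerivAt_Li2_zero
      have e3 : HasDerivAt Li2 1 ((((0:ℝ):ℂ)*z)^2) := by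
        rw [show (((0:ℝ):ℂ)*z)^2 = 0 by simp]; exact hasDerivAt_Li2_zero
      have k1 := (e1.comp ((0:ℝ):ℂ) hinner1).comp_ofReal
      have k2 := (e2.comp ((0:ℝ):ℂ) hinner2).comp_ofReal
      have k3 : HasDerivAt (fun s : ℝ => Li2 (((s:ℂ)*z)^2)) 0 0 := by
        have := (e3.comp ((0:ℝ):ℂ) hinner3).comp_ofReal
        simpa using this
      have := (k1.fun_add k2).fun_sub ((k3.const_mul ((2⁻¹:ℂ))))
      rw [hG_def]
      simpa using this
    · have hx0 : (0:ℝ) < x := h0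
      set u : ℂ := (x:ℂ) * z with hu_def
      have hu_im : u.im ≠ 0 := by
        rw [hu_def, im_real_mul]; exact mul_ne_zero (ne_of_gt hx0) him1
      have hu0 : u ≠ 0 := fun hc => hu_im (by rw [hc]; rfl)
      have hOk1 : Ok u := ok_of_im_ne hu_im
      have hOk2 : Ok (-u) := ok_of_im_ne (by rwa [Complex.neg_im, neg_ne_zero])
      have hOk3 : Ok (u^2) := by
        apply ok_of_im_ne
        have : u^2 = ((x^2 : ℝ):ℂ) * z^2 := by rw [hu_def]; push_cast; ring
        rw [this, im_real_mul]
        exact mul_ne_zero (by positivity) him2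
      have hu2 : u^2 ≠ 0 := pow_ne_zero 2 hu0
      -- log addition
      have hre_u : |u.re| < 1 := by
        rw [hu_def, show ((x:ℂ)*z).re = x * z.re by simp [Complex.mul_re]]
        rw [abs_mul, _root_.abs_of_pos hx0]
        calc x * |z.re| ≤ 1 * |z.re| := by
              apply mul_le_mul_of_nonneg_right hx.2 (abs_nonneg _)
          _ < 1 := by rw [one_mul]; exact hre
      have hre1 : 0 < (1 - u).re := by
        rw [Complex.sub_re, Complex.one_re]
        have := abs_lt.mp hre_u; linarith
      have hre2 : 0 < (1 + u).re := by
        rw [Complex.add_re, Complex.one_re]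
        have := abs_lt.mp hre_u; linarith
      have hne1 : (1 - u) ≠ 0 := fun hc => by rw [hc] at hre1; simp at hre1
      have hne2 : (1 + u) ≠ 0 := fun hc => by rw [hc] at hre2; simp at hre2
      have harg1 := Complex.abs_arg_lt_pi_div_two_iff.mpr (Or.inl hre1)
      have harg2 := Complex.abs_arg_lt_pi_div_two_iff.mpr (Or.inl hre2)
      have hlogadd : Complex.log (1 - u^2) = Complex.log (1 - u) + Complex.log (1 + u) := by
        rw [show (1 : ℂ) - u^2 = (1-u)*(1+u) by ring]
        apply Complex.log_mul hne1 hne2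
        constructor
        · have h1 := abs_lt.mp harg1; have h2 := abs_lt.mp harg2; linarith
        · have h1 := abs_lt.mp harg1; have h2 := abs_lt.mp harg2; linarith
      -- derivatives
      have k1 := ((hasDerivAt_Li2' hOk1 hu0).comp (x:ℂ) hinner1).comp_ofReal
      have k2' : HasDerivAt Li2 (-Complex.log (1 + u) / (-u)) (-u) := by
        have := hasDerivAt_Li2' hOk2 (neg_ne_zero.mpr hu0)
        simpa [sub_neg_eq_add] using this
      have k2 := (k2'.comp (x:ℂ) hinner2).comp_ofReal
      have k3 := ((hasDerivAt_Li2' hOk3 hu2).comp (x:ℂ) hinner3).comp_ofReal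
      have total := (k1.fun_add k2).fun_sub (k3.const_mul ((2⁻¹:ℂ)))
      have : -Complex.log (1 - u) / u * z + -Complex.log (1 + u) / (-u) * (-z) -
          (2⁻¹:ℂ) * (-Complex.log (1 - u^2) / u^2 * (2 * u * z)) = 0 := by
        rw [hlogadd]
        field_simp
        ring
      rw [this] at total
      rw [hG_def]
      exact total
  have hcont : ContinuousOn G (Set.Icc 0 1) :=
    fun x hx => (hG x hx).continuousAt.continuousWithinAt
  have hder : ∀ x ∈ Set.Ico (0:ℝ) 1, HasDerivWithinAt G 0 (Set.Ici x) x :=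
    fun x hx => (hG x (Set.Ico_subset_Icc_self hx)).hasDerivWithinAt
  have hconst := constant_of_has_deriv_right_zero hcont hder 1 (by norm_num)
  have hG1 : G 1 = Li2 z + Li2 (-z) - (2⁻¹:ℂ) * Li2 (z^2) := by
    rw [hG_def]; norm_num
  have hG0 : G 0 = 0 := by rw [hG_def]; simp [Li2_zero]
  rw [hG1, hG0] at hconst
  linear_combination hconst

lemma landen {c : ℂ} (hc : c.im < 0) :
    Li2 (c/(c-1)) = -Li2 c - (2⁻¹:ℂ) * (Complex.log (1 - c))^2 := by
  set F : ℝ → ℂ := fun x =>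
    Li2 (((x:ℂ)*c)/((x:ℂ)*c-1)) + Li2 ((x:ℂ)*c) + (2⁻¹:ℂ) * (Complex.log (1 - (x:ℂ)*c))^2
    with hF_def
  have hc0 : c ≠ 0 := fun hcc => by rw [hcc] at hc; simp at hc
  have hF : ∀ x ∈ Set.Icc (0:ℝ) 1, HasDerivAt F 0 x := by
    intro x hx
    have hden : ∀ s : ℝ, s ∈ Set.Icc (0:ℝ) 1 → ((s:ℂ)*c - 1) ≠ 0 := by
      intro s hs hcon
      rcases eq_or_lt_of_le hs.1 with h0 | h0
      · rw [← h0] at hcon; simp at hcon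
      · have : ((s:ℂ)*c - 1).im = s * c.im := by simp [Complex.sub_im, im_real_mul]
        rw [hcon] at this; simp at this
        rcases this with h | h
        · exact absurd h (ne_of_gt h0)
        · exact absurd h (ne_of_lt hc)
    have hdenx := hden x hx
    have hgC : HasDerivAt (fun s : ℂ => (s*c)/(s*c-1)) (-c/(((x:ℂ)*c-1)^2)) (x:ℂ) := by
      have h1 : HasDerivAt (fun s : ℂ => s*c) c (x:ℂ) := by
        simpa using (hasDerivAt_id (x:ℂ)).mul_const c
      have h2 : HasDerivAt (fun s : ℂ => s*c-1) c (x:ℂ) := h1.sub_const 1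
      have := h1.div h2 hdenx
      refine this.congr_deriv (Eq.symm ?_)
      field_simp
      ring
    have hinner2 : HasDerivAt (fun s : ℂ => s*c) c (x:ℂ) := by
      simpa using (hasDerivAt_id (x:ℂ)).mul_const c
    have hinner1m : HasDerivAt (fun s : ℂ => 1 - s*c) (-c) (x:ℂ) := by
      simpa using hinner2.const_sub 1
    rcases eq_or_lt_of_le hx.1 with h0 | h0
    · subst h0
      have e1 : HasDerivAt Li2 1 ((((0:ℝ):ℂ)*c)/(((0:ℝ):ℂ)*c-1)) := by
        rw [show (((0:ℝ):ℂ)*c)/(((0:ℝ):ℂ)*c-1) = 0 by simp]; exact hasDerivAt_Li2_zero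
      have e2 : HasDerivAt Li2 1 (((0:ℝ):ℂ)*c) := by
        rw [show ((0:ℝ):ℂ)*c = 0 by simp]; exact hasDerivAt_Li2_zero
      have k1 := (e1.comp ((0:ℝ):ℂ) hgC).comp_ofReal
      have k2 := (e2.comp ((0:ℝ):ℂ) hinner2).comp_ofReal
      have hslit : (1 - ((0:ℝ):ℂ)*c) ∈ Complex.slitPlane := by
        rw [Complex.mem_slitPlane_iff]; left; simp
      have hlog := (Complex.hasDerivAt_log hslit).comp ((0:ℝ):ℂ) hinner1m
      have k3 := ((hlog.fun_pow 2).const_mul ((2⁻¹:ℂ))).comp_ofReal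
      have total := (k1.fun_add k2).fun_add k3
      rw [hF_def]
      refine total.congr_deriv (Eq.symm ?_)
      norm_num
    · set u : ℂ := (x:ℂ) * c with hu_def
      have hu_im : u.im < 0 := by
        rw [hu_def, im_real_mul]
        exact mul_neg_of_pos_of_neg h0 hc
      have hu0 : u ≠ 0 := fun hcon => by rw [hcon] at hu_im; simp at hu_im
      have hOku : Ok u := ok_of_im_ne (ne_of_lt hu_im)
      have h1u_im : 0 < (1 - u).im := by rw [Complex.sub_im, Complex.one_im]; linarith
      have h1u : (1:ℂ) - u ≠ 0 := fun hcon => by rw [hcon] at h1u_im; simp at h1u_im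
      set g : ℂ := u/(u-1) with hg_def
      have hg_im : 0 < g.im := by
        rw [hg_def, Complex.div_im]
        have hns : 0 < Complex.normSq (u-1) := by
          rw [Complex.normSq_pos]; exact hdenx
        rw [Complex.sub_re, Complex.sub_im, Complex.one_re, Complex.one_im]
        have heq : u.im * (u.re - 1) / Complex.normSq (u - 1) -
            u.re * (u.im - 0) / Complex.normSq (u - 1) =
            (-u.im) / Complex.normSq (u-1) := by ring
        rw [heq]
        exact div_pos (by linarith) hns
      have hOkg : Ok g := ok_of_im_ne (ne_of_gt hg_im)
      have hg0 : g ≠ 0 := fun hcon => by rw [hcon] at hg_im; simp at hg_im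
      have honeg : 1 - g = (1-u)⁻¹ := by
        rw [hg_def]
        field_simp
        ring
      have hargu : (1-u).arg ≠ Real.pi := by
        intro hcon
        have := Complex.arg_eq_pi_iff.mp hcon
        linarith [this.2, h1u_im]
      have hloginv : Complex.log (1 - g) = -Complex.log (1-u) := by
        rw [honeg, Complex.log_inv _ hargu]
      -- derivatives
      have k1 := ((hasDerivAt_Li2' hOkg hg0).comp (x:ℂ) hgC).comp_ofReal
      have k2 := ((hasDerivAt_Li2' hOku hu0).comp (x:ℂ) hinner2).comp_ofReal
      have hslit : (1 - (x:ℂ)*c) ∈ Complex.slitPlane := by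
        rw [Complex.mem_slitPlane_iff]; right
        rw [← hu_def]; exact ne_of_gt h1u_im
      have hlog := (Complex.hasDerivAt_log hslit).comp (x:ℂ) hinner1m
      have k3 := ((hlog.fun_pow 2).const_mul ((2⁻¹:ℂ))).comp_ofReal
      have total := (k1.fun_add k2).fun_add k3
      rw [hF_def]
      refine total.congr_deriv (Eq.symm ?_)
      have hd : u - 1 ≠ 0 := hdenx
      simp only [Function.comp]
      rw [show ((2:ℕ) - 1 : ℕ) = 1 by norm_num]
      rw [← hu_def, hloginv, hg_def]
      push_cast
      field_simp
      ring
  have hcont : ContinuousOn F (Set.Icc 0 1) :=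
    fun x hx => (hF x hx).continuousAt.continuousWithinAt
  have hder : ∀ x ∈ Set.Ico (0:ℝ) 1, HasDerivWithinAt F 0 (Set.Ici x) x :=
    fun x hx => (hF x (Set.Ico_subset_Icc_self hx)).hasDerivWithinAt
  have hconst := constant_of_has_deriv_right_zero hcont hder 1 (by norm_num)
  have hF1 : F 1 = Li2 (c/(c-1)) + Li2 c + (2⁻¹:ℂ) * (Complex.log (1 - c))^2 := by
    rw [hF_def]; norm_num
  have hF0 : F 0 = 0 := by rw [hF_def]; simp [Li2_zero]
  rw [hF1, hF0] at hconst
  linear_combination hconst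

lemma Li2_conj {z : ℂ} (hz : z.im ≠ 0) :
    Li2 ((starRingEnd ℂ) z) = (starRingEnd ℂ) (Li2 z) := by
  have hpt : ∀ t : ℝ, Complex.log (1 - (starRingEnd ℂ) z * (t:ℂ)) / (t:ℂ) =
      (starRingEnd ℂ) (Complex.log (1 - z * (t:ℂ)) / (t:ℂ)) := by
    intro t
    have hconj : (1 : ℂ) - (starRingEnd ℂ) z * (t:ℂ) = (starRingEnd ℂ) (1 - z * (t:ℂ)) := by
      simp [map_sub, map_mul, Complex.conj_ofReal]
    rw [hconj, map_div₀, Complex.conj_ofReal]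
    congr 1
    apply Complex.log_conj
    intro hcon
    rcases Complex.arg_eq_pi_iff.mp hcon with ⟨hre', him⟩
    rcases eq_or_ne t 0 with h | h
    · rw [h] at hre'; simp at hre'; linarith
    · apply hz
      have : (1 - z * (t:ℂ)).im = -(z.im * t) := im_one_sub_mul z t
      rw [this] at him
      have := neg_eq_zero.mp him
      rcases mul_eq_zero.mp this with h1 | h1
      · exact h1
      · exact absurd h1 h
  unfold Li2
  rw [funext hpt]
  rw [intervalIntegral.integral_of_le zero_le_one, intervalIntegral.integral_of_le zero_le_one,
    integral_conj, map_neg]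

/-- The Bloch–Wigner function D₂(z) = Im(Li₂(z)) + arg(1−z)·log|z|. -/
noncomputable def D2 (z : ℂ) : ℝ :=
  (Li2 z).im + Complex.arg (1 - z) * Real.log ‖z‖

/-- ζ = exp(2πi/5). -/
noncomputable def ζ5 : ℂ := Complex.exp (2 * Real.pi * Complex.I / 5)

/-- The golden ratio φ = (1+√5)/2, as a complex number. -/
noncomputable def goldφ : ℂ := (((1 + Real.sqrt 5) / 2 : ℝ) : ℂ)

theorem stmt_9 : D2 ζ5 + 2 * D2 (ζ5 ^ 2) = 2 * D2 (goldφ * ζ5) := by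
  have pi_pos := Real.pi_pos
  set θ : ℝ := Real.pi / 5 with hθ
  have hθpos : (0:ℝ) < θ := by positivity
  have hθ5 : Real.pi = 5 * θ := by rw [hθ]; ring
  have hπc : (Real.pi:ℂ) = 5*(θ:ℂ) := by rw [hθ5]; push_cast; ring
  have hsin : 0 < Real.sin θ := Real.sin_pos_of_pos_of_lt_pi hθpos (by linarith)
  have hsin2 : 0 < Real.sin (2*θ) := Real.sin_pos_of_pos_of_lt_pi (by linarith) (by linarith)
  have hsin4 : 0 < Real.sin (4*θ) := Real.sin_pos_of_pos_of_lt_pi (by linarith) (by linarith)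
  set z₀ : ℂ := Complex.exp ((θ:ℂ) * Complex.I) with hz0
  have hz0_ne : z₀ ≠ 0 := Complex.exp_ne_zero _
  have him_z0 : z₀.im = Real.sin θ := Complex.exp_ofReal_mul_I_im θ
  have hre_z0 : z₀.re = Real.cos θ := Complex.exp_ofReal_mul_I_re θ
  have habs_z0 : ‖z₀‖ = 1 := Complex.norm_exp_ofReal_mul_I θ
  have hpow2 : ∀ a : ℂ, Complex.exp a ^ 2 = Complex.exp (2*a) := fun a => by
    rw [pow_two, ← Complex.exp_add, two_mul]
  have hexp2 : z₀^2 = Complex.exp (((2*θ:ℝ):ℂ) * Complex.I) := by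
    rw [hz0, hpow2]; congr 1; push_cast; ring
  have hζ : ζ5 = z₀^2 := by
    rw [hexp2]; unfold ζ5; congr 1; push_cast [hπc]; ring
  have hζ2 : ζ5^2 = Complex.exp (((4*θ:ℝ):ℂ) * Complex.I) := by
    rw [hζ, hexp2, hpow2]; congr 1; push_cast; ring
  have him_ζ2 : (ζ5^2).im = Real.sin (4*θ) := by
    rw [hζ2]; exact Complex.exp_ofReal_mul_I_im _
  have habs_ζ : ‖ζ5‖ = 1 := by rw [hζ, norm_pow, habs_z0]; norm_num
  have habs_ζ2 : ‖(ζ5^2)‖ = 1 := by rw [norm_pow, habs_ζ]; norm_num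
  -- cos θ value and golden ratio facts
  have hcos : Real.cos θ = (1 + Real.sqrt 5)/4 := by rw [hθ]; exact Real.cos_pi_div_five
  have h5 : Real.sqrt 5 ^ 2 = 5 := Real.sq_sqrt (by norm_num)
  have hs5pos : (0:ℝ) ≤ Real.sqrt 5 := Real.sqrt_nonneg 5
  have hs5lt : Real.sqrt 5 < 3 := by nlinarith
  -- duplication at z₀
  have hdup := dup (z := z₀) (by rw [him_z0]; exact ne_of_gt hsin)
    (by rw [hexp2, Complex.exp_ofReal_mul_I_im]; exact ne_of_gt hsin2)
    (by rw [hre_z0, hcos, abs_of_pos (by linarith)]; linarith)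
  -- conjugation identities
  have hconjz2 : (starRingEnd ℂ) (ζ5^2) = -z₀ := by
    rw [hζ2, ← Complex.exp_conj]
    have h1 : (starRingEnd ℂ) (((4*θ:ℝ):ℂ) * Complex.I) = ((-(4*θ):ℝ):ℂ) * Complex.I := by
      rw [map_mul, Complex.conj_I, Complex.conj_ofReal]; push_cast; ring
    rw [h1]
    have h2 : ((-(4*θ):ℝ):ℂ) * Complex.I =
        ((θ:ℂ) * Complex.I + (Real.pi:ℂ) * Complex.I) - 2*(Real.pi:ℂ)*Complex.I := by
      rw [hπc]; push_cast; ring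
    rw [h2, Complex.exp_sub, Complex.exp_add, Complex.exp_two_pi_mul_I,
      Complex.exp_pi_mul_I]
    rw [← hz0]; ring
  have hconj_z0 : z₀⁻¹ = (starRingEnd ℂ) z₀ := Complex.inv_eq_conj habs_z0
  -- golden ratio key identity
  have hgold : goldφ = ((2 * Real.cos θ : ℝ):ℂ) := by
    unfold goldφ; rw [hcos]; push_cast; ring
  have hkey : z₀^2 + 1 = goldφ * z₀ := by
    have hmc : z₀ * (starRingEnd ℂ) z₀ = 1 := by
      rw [Complex.mul_conj, Complex.normSq_eq_norm_sq, habs_z0]; norm_num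
    have hac : z₀ + (starRingEnd ℂ) z₀ = ((2 * Real.cos θ : ℝ):ℂ) := by
      rw [Complex.add_conj, hre_z0]
    calc z₀^2 + 1 = z₀ * (z₀ + (starRingEnd ℂ) z₀) := by rw [mul_add, hmc]; ring
      _ = goldφ * z₀ := by rw [hac, hgold]; ring
  have hφ1 : goldφ^2 = goldφ + 1 := by
    unfold goldφ; push_cast
    have : ((Real.sqrt 5:ℂ))^2 = 5 := by
      rw [← Complex.ofReal_pow, h5]; norm_num
    linear_combination (1/4 : ℂ) * this
  have him1z0 : ((1:ℂ) - z₀).im = -Real.sin θ := by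
    rw [Complex.sub_im, Complex.one_im, him_z0]; ring
  have h1z0_ne : (1:ℂ) - z₀ ≠ 0 := by
    intro hcon; rw [hcon] at him1z0; simp at him1z0; linarith
  have hφζ : goldφ * ζ5 = ((1:ℂ) - z₀)⁻¹ := by
    apply eq_inv_of_mul_eq_one_left
    rw [hζ]
    linear_combination (-(goldφ*z₀) + goldφ - goldφ^2) * hkey + (1 - goldφ*z₀) * hφ1
  have hu2 : -z₀ = goldφ^2 * ((1:ℂ)-z₀)^2 := by
    linear_combination (-goldφ^2) * hkey + ((1-goldφ)*z₀) * hφ1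
  have hu : (1:ℂ) - goldφ * ζ5 = goldφ^2 * ((1:ℂ)-z₀) := by
    rw [hφζ]
    rw [show (1:ℂ) - (1-z₀)⁻¹ = (-z₀) * (1-z₀)⁻¹ by field_simp; ring]
    rw [hu2]
    field_simp
  -- Landen at c = z₀⁻¹
  have hcim : (z₀⁻¹).im < 0 := by
    rw [hconj_z0, Complex.conj_im, him_z0]; linarith
  have hlan := landen hcim
  have hne2 : z₀⁻¹ - 1 ≠ 0 := by
    intro hcon
    have : z₀⁻¹ = 1 := by linear_combination hcon
    rw [this] at hcim; simp at hcim
  have hfrac : z₀⁻¹/(z₀⁻¹-1) = ((1:ℂ)-z₀)⁻¹ := by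
    field_simp
  rw [hfrac] at hlan
  have h1c : (1:ℂ) - z₀⁻¹ = (starRingEnd ℂ) ((1:ℂ) - z₀) := by
    rw [hconj_z0, map_sub, map_one]
  -- imaginary parts
  set A : ℝ := (Li2 z₀).im with hA
  set B : ℝ := (Li2 ζ5).im with hB
  set C : ℝ := (Li2 (ζ5^2)).im with hC
  set lr : ℝ := Real.log ‖((1:ℂ)-z₀)‖ with hlr
  set ar : ℝ := ((1:ℂ)-z₀).arg with har
  have hmC : (Li2 (-z₀)).im = -C := by
    rw [← hconjz2, Li2_conj (by rw [him_ζ2]; exact ne_of_gt hsin4), Complex.conj_im, hC]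
  have hmA : (Li2 (z₀⁻¹)).im = -A := by
    rw [hconj_z0, Li2_conj (by rw [him_z0]; exact ne_of_gt hsin), Complex.conj_im, hA]
  have hdup_im : A + (-C) = 2⁻¹ * B := by
    have h := congrArg Complex.im hdup
    rw [Complex.add_im, hmC] at h
    rw [show ((1:ℂ)/2) * Li2 (z₀^2) = ((2⁻¹:ℝ):ℂ) * Li2 ζ5 by rw [hζ]; norm_num] at h
    rw [show (((2⁻¹:ℝ):ℂ) * Li2 ζ5).im = 2⁻¹ * (Li2 ζ5).im by
      simp [Complex.mul_im]] at h
    exact h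
  have harg_ne : ((1:ℂ)-z₀).arg ≠ Real.pi := by
    intro hcon
    rcases Complex.arg_eq_pi_iff.mp hcon with ⟨_, him⟩
    rw [him1z0] at him; linarith
  have hlan_im : (Li2 (((1:ℂ)-z₀)⁻¹)).im = A + lr * ar := by
    rw [hlan]
    rw [h1c, Complex.log_conj _ harg_ne]
    rw [Complex.sub_im, Complex.neg_im, hmA]
    have : ((2⁻¹:ℂ) * ((starRingEnd ℂ) (Complex.log (1 - z₀)))^2).im =
        2⁻¹ * (((starRingEnd ℂ) (Complex.log (1 - z₀)))^2).im := by
      rw [show ((2⁻¹:ℂ)) = ((2⁻¹:ℝ):ℂ) by norm_num]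
      simp [Complex.mul_im]
    rw [this]
    rw [show ((starRingEnd ℂ) (Complex.log (1 - z₀)))^2 =
        (starRingEnd ℂ) ((Complex.log (1 - z₀))^2) by rw [map_pow]]
    rw [Complex.conj_im]
    rw [pow_two, Complex.mul_im, Complex.log_re, Complex.log_im, ← hlr, ← har]
    ring
  -- final D2 computations
  have hD2ζ : D2 ζ5 = B := by
    unfold D2; rw [habs_ζ, Real.log_one, mul_zero, add_zero, hB]
  have hD2ζ2 : D2 (ζ5^2) = C := by
    unfold D2; rw [habs_ζ2, Real.log_one, mul_zero, add_zero, hC]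
  have hD2φ : D2 (goldφ * ζ5) = A := by
    unfold D2
    have hargu : (1 - goldφ * ζ5).arg = ar := by
      rw [hu]
      rw [show goldφ^2 = ((((1 + Real.sqrt 5) / 2)^2 : ℝ):ℂ) by unfold goldφ; push_cast; ring]
      rw [har]
      apply Complex.arg_real_mul
      positivity
    rw [hargu, hφζ, hlan_im, norm_inv, Real.log_inv, ← hlr]
    ring
  rw [hD2ζ, hD2ζ2, hD2φ]
  linarith [hdup_im]
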